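/- Fix an infinite cardinal κ and an ordinal α with κ ≤ α < κ⁺, and let W(α) be the set of allowed diagrams in the language L_α defined below. Then for every n with 1 ≤ n < ω and every w ∈ W(α) with domain {1,…,n}: w(n) = P_{n,γ,β} for some γ if and only if ER(w; W(α)) = β. -/

import Mathlib

universe u v

open Cardinal

/-- A relational coloring language: a family of pairwise disjoint nonempty sets `R_n`
(`n ≥ 1`) of `n`-ary colors, encoded as a type of colors together with an arity map
whose fibers over `n ≥ 1` are all nonempty. -/
structure ColoringLanguage : Type (u + 1) where
  Color : Type u
  arity : Color → ℕ
  arity_pos : ∀ r, 1 ≤ arity r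
  exists_arity : ∀ n : ℕ, 1 ≤ n → ∃ r, arity r = n

namespace ColoringLanguage

variable (L : ColoringLanguage.{u})

/-- A diagram is (encoded as) a list of colors whose `i`-th entry (0-based) is an
`(i+1)`-ary color; it represents the function `w : [n] → R` with `w(k) ∈ R_k`. -/
def IsDiagram (l : List L.Color) : Prop :=
  ∀ (i : ℕ) (h : i < l.length), L.arity l[i] = i + 1

/-- A set of allowed diagrams: a nonempty set of diagrams closed under restriction to
initial segments. -/
def IsAllowed (W : Set (List L.Color)) : Prop :=
  W.Nonempty ∧ (∀ l ∈ W, L.IsDiagram l) ∧ ∀ l ∈ W, ∀ m : ℕ, l.take m ∈ W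

end ColoringLanguage

/-- `ERge W γ l` says that the existence rank of `l` with respect to `W` is `≥ γ`:
`ER(l;W) ≥ β + 1` iff some one-step extension `l' ∈ W` of `l` has `ER(l';W) ≥ β`,
with the limit (and zero) clauses as usual. -/
noncomputable def ERge {C : Type v} (W : Set (List C)) : Ordinal.{u} → List C → Prop :=
  WellFounded.fix Ordinal.lt_wf fun α IH l =>
    ∀ β, ∀ h : β < α,
      ∃ l' ∈ W, l'.length = l.length + 1 ∧ l'.take l.length = l ∧ IH β h l'

/-- `prunedW W S` is `W_S`, the set of elements of `W` comparable with some element of `S`. -/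
def prunedW {C : Type v} (W S : Set (List C)) : Set (List C) :=
  {w ∈ W | ∃ u ∈ S, w <+: u ∨ u <+: w}

/-- `quotW W wbar` is `W / w̄`: the set of diagrams `w / w̄` for `w ∈ W` extending `w̄`. -/
def quotW {C : Type v} (W : Set (List C)) (wbar : List C) : Set (List C) :=
  (fun l => l.drop wbar.length) '' {l ∈ W | wbar <+: l}

/-- The beth function with base `κ`: `ℶ_0(κ) = κ`, `ℶ_{α+1}(κ) = 2 ^ ℶ_α(κ)`,
and suprema at limits. -/
noncomputable def bethF (κ : Cardinal.{u}) (o : Ordinal.{u}) : Cardinal.{u} :=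
  Ordinal.limitRecOn o κ (fun _ ih => 2 ^ ih)
    fun o' _ ih => ⨆ b : Set.Iio o', ih b.1 b.2

/-- The cardinals `κ_α`: `κ_α = α` for finite `α`, suprema at limits, and
`κ_{β+1} = 2 ^ κ_β` for `β ≥ ω`. -/
noncomputable def kappaC (o : Ordinal.{u}) : Cardinal.{u} :=
  Ordinal.limitRecOn o 0
    (fun o' ih => if o' < Ordinal.omega0 then ih + 1 else 2 ^ ih)
    fun o' _ ih => ⨆ b : Set.Iio o', ih b.1 b.2

namespace ColoringLanguage

variable (L : ColoringLanguage.{u}) {σ τ : Type u}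

/-- `c` is an `L`-coloring of the set `M`: every finite nonempty `A ⊆ M` gets a color
of arity `|A|`. (Values of `c` outside of `M` are irrelevant.) -/
def IsColoring (M : Set σ) (c : Finset σ → L.Color) : Prop :=
  ∀ A : Finset σ, ↑A ⊆ M → A.Nonempty → L.arity (c A) = A.card

/-- `B` is monochromatic for `c`: any two finite nonempty subsets of `B` of equal size
get the same color. -/
def Mono (c : Finset σ → L.Color) (B : Set σ) : Prop :=
  ∀ A₁ A₂ : Finset σ, ↑A₁ ⊆ B → ↑A₂ ⊆ B → A₁.Nonempty → A₁.card = A₂.card → c A₁ = c A₂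

/-- `l` is the diagram of the (monochromatic) finite set `B` under `c`. -/
def DiagramOf (c : Finset σ → L.Color) (B : Finset σ) (l : List L.Color) : Prop :=
  l.length = B.card ∧ ∀ A : Finset σ, A ⊆ B → A.Nonempty → l[A.card - 1]? = some (c A)

/-- `(M,c)` is a member of the coloring class `K(W)`: `c` is an `L`-coloring of `M`
and every finite nonempty monochromatic subset of `M` has its diagram in `W`. -/
def MemK (W : Set (List L.Color)) (M : Set σ) (c : Finset σ → L.Color) : Prop :=
  L.IsColoring M c ∧
    ∀ B : Finset σ, ↑B ⊆ M → B.Nonempty → L.Mono c ↑B → ∃ l ∈ W, L.DiagramOf c B l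

/-- `(M,c)` is a substructure of `(N,c')`. -/
def Substruct (M : Set σ) (c : Finset σ → L.Color) (N : Set σ)
    (c' : Finset σ → L.Color) : Prop :=
  M ⊆ N ∧ ∀ A : Finset σ, ↑A ⊆ M → A.Nonempty → c A = c' A

/-- `f` is an embedding of `(M,c)` into `(N,c')`. -/
def Emb (f : σ → τ) (M : Set σ) (c : Finset σ → L.Color) (N : Set τ)
    (c' : Finset τ → L.Color) : Prop :=
  Set.InjOn f M ∧ f '' M ⊆ N ∧
    ∀ A : Finset σ, ↑A ⊆ M → A.Nonempty →
      haveI := Classical.decEq τ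
      c' (A.image f) = c A

/-- `K(W)` has the amalgamation property for models of size `lam`. -/
def HasAPAt (W : Set (List L.Color)) (lam : Cardinal.{u}) : Prop :=
  ∀ (σ : Type u) (M₀ M₁ M₂ : Set σ) (c₀ c₁ c₂ : Finset σ → L.Color),
    L.MemK W M₀ c₀ → L.MemK W M₁ c₁ → L.MemK W M₂ c₂ →
    Cardinal.mk ↥M₀ = lam → Cardinal.mk ↥M₁ = lam → Cardinal.mk ↥M₂ = lam →
    L.Substruct M₀ c₀ M₁ c₁ → L.Substruct M₀ c₀ M₂ c₂ →
    ∃ (τ : Type u) (N : Set τ) (c : Finset τ → L.Color) (f₁ f₂ : σ → τ),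
      L.MemK W N c ∧ L.Emb f₁ M₁ c₁ N c ∧ L.Emb f₂ M₂ c₂ N c ∧
      ∀ x ∈ M₀, f₁ x = f₂ x

/-- `K(W)` has the disjoint amalgamation property for models of size `lam`. -/
def HasDAPAt (W : Set (List L.Color)) (lam : Cardinal.{u}) : Prop :=
  ∀ (σ : Type u) (M₀ M₁ M₂ : Set σ) (c₀ c₁ c₂ : Finset σ → L.Color),
    L.MemK W M₀ c₀ → L.MemK W M₁ c₁ → L.MemK W M₂ c₂ →
    Cardinal.mk ↥M₀ = lam → Cardinal.mk ↥M₁ = lam → Cardinal.mk ↥M₂ = lam →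
    L.Substruct M₀ c₀ M₁ c₁ → L.Substruct M₀ c₀ M₂ c₂ →
    ∃ (τ : Type u) (N : Set τ) (c : Finset τ → L.Color) (f₁ f₂ : σ → τ),
      L.MemK W N c ∧ L.Emb f₁ M₁ c₁ N c ∧ L.Emb f₂ M₂ c₂ N c ∧
      (∀ x ∈ M₀, f₁ x = f₂ x) ∧ f₁ '' M₁ ∩ f₂ '' M₂ = f₁ '' M₀

end ColoringLanguage

/-- The colors of the language `L_α` of [BKS]: `P_{n,γ,β}` encoded as the triple
`(n, γ, β)`, where either `n = 1`, `γ ≤ κ`, `β = α`, or `2 ≤ n`, `γ < κ`, `β ≤ α`. -/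
def ExColor (κ : Cardinal.{u}) (α : Ordinal.{u}) : Type (u + 1) :=
  {p : ℕ × Ordinal.{u} × Ordinal.{u} //
    (p.1 = 1 ∧ p.2.1 ≤ κ.ord ∧ p.2.2 = α) ∨ (2 ≤ p.1 ∧ p.2.1 < κ.ord ∧ p.2.2 ≤ α)}

/-- The language `L_α` of [BKS], as a relational coloring language. -/
noncomputable def ExLang (κ : Cardinal.{u}) (α : Ordinal.{u}) (hκ : ℵ₀ ≤ κ) :
    ColoringLanguage.{u + 1} where
  Color := ExColor κ α
  arity r := r.1.1
  arity_pos := by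
    intro r
    show 1 ≤ r.1.1
    rcases r.2 with ⟨h, -⟩ | ⟨h, -⟩ <;> omega
  exists_arity := by
    intro n hn
    have hκ0 : (0 : Ordinal.{u}) < κ.ord := by
      have h0 : (0 : Cardinal.{u}) < κ := lt_of_lt_of_le Cardinal.aleph0_pos hκ
      simpa using Cardinal.ord_lt_ord.mpr h0
    rcases Nat.lt_or_ge n 2 with h | h
    · have hn1 : n = 1 := by omega
      subst hn1
      exact ⟨⟨(1, 0, α), Or.inl ⟨rfl, zero_le, rfl⟩⟩, rfl⟩
    · exact ⟨⟨(n, 0, 0), Or.inr ⟨h, hκ0, zero_le⟩⟩, rfl⟩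

/-- The set of allowed diagrams `W(α)`: diagrams in `L_α` whose third indices are
strictly decreasing. -/
def ExW (κ : Cardinal.{u}) (α : Ordinal.{u}) : Set (List (ExColor κ α)) :=
  {l | (∀ (i : ℕ) (h : i < l.length), (l[i]).1.1 = i + 1) ∧
    ∀ (i j : ℕ) (hi : i < l.length) (hj : j < l.length),
      i < j → (l[j]).1.2.2 < (l[i]).1.2.2}

lemma erge_iff {C : Type v} (W : Set (List C)) (a : Ordinal.{u}) (l : List C) :
    ERge W a l ↔ ∀ β < a, ∃ l' ∈ W, l'.length = l.length + 1 ∧ l'.take l.length = l ∧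
      ERge W β l' := by
  unfold ERge
  rw [WellFounded.fix_eq]

lemma erge_mono {C : Type v} (W : Set (List C)) {a b : Ordinal.{u}} (h : a ≤ b)
    {l : List C} (hb : ERge W b l) : ERge W a l := by
  rw [erge_iff] at hb ⊢
  intro β hβ
  exact hb β (hβ.trans_le h)

lemma exw_le (κ : Cardinal.{u}) (α : Ordinal.{u}) (r : ExColor κ α) : r.1.2.2 ≤ α := by
  rcases r.2 with ⟨-, -, h⟩ | ⟨-, -, h⟩
  · exact le_of_eq h
  · exact h

lemma main_claim (κ : Cardinal.{u}) (α : Ordinal.{u}) (hκ : ℵ₀ ≤ κ) :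
    ∀ β : Ordinal.{u}, ∀ w : List (ExColor κ α), w ∈ ExW κ α → ∀ h0 : 0 < w.length,
      (w[w.length - 1]'(by omega)).1.2.2 = β →
      ERge (ExW κ α) β w ∧ ¬ ERge (ExW κ α) (β + 1) w := by
  have hκ0 : (0 : Ordinal.{u}) < κ.ord := by
    have h0 : (0 : Cardinal.{u}) < κ := lt_of_lt_of_le Cardinal.aleph0_pos hκ
    simpa using Cardinal.ord_lt_ord.mpr h0
  intro β
  induction β using Ordinal.induction with
  | h β IH =>
  intro w hw h0 hβ
  constructor
  · rw [erge_iff]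
    intro γ hγ
    have hβα : β ≤ α := hβ ▸ exw_le κ α _
    have hγα : γ ≤ α := le_of_lt (lt_of_lt_of_le hγ hβα)
    set c : ExColor κ α := ⟨(w.length + 1, 0, γ), Or.inr ⟨by omega, hκ0, hγα⟩⟩ with hc
    have hmem : w ++ [c] ∈ ExW κ α := by
      constructor
      · intro i hi
        simp only [List.length_append, List.length_cons, List.length_nil] at hi
        rcases Nat.lt_or_ge i w.length with h | h
        · rw [List.getElem_append_left h]
          exact hw.1 i h
        · have hiw : i = w.length := by omega
          rw [List.getElem_concat_length hiw]
          show w.length + 1 = i + 1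
          omega
      · intro i j hi hj hij
        simp only [List.length_append, List.length_cons, List.length_nil] at hi hj
        rcases Nat.lt_or_ge j w.length with h | h
        · rw [List.getElem_append_left h, List.getElem_append_left (by omega : i < w.length)]
          exact hw.2 i j (by omega) h hij
        · have hjw : j = w.length := by omega
          have hiw : i < w.length := by omega
          rw [List.getElem_concat_length hjw, List.getElem_append_left hiw]
          show γ < _
          have hle : (w[w.length - 1]'(by omega)).1.2.2 ≤ (w[i]'hiw).1.2.2 := by
            rcases Nat.lt_or_ge i (w.length - 1) with h' | h'
            · exact le_of_lt (hw.2 i (w.length - 1) hiw (by omega) h')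
            · have : i = w.length - 1 := by omega
              subst this
              exact le_rfl
          exact lt_of_lt_of_le (hβ ▸ hγ) hle
    have hlast : ((w ++ [c])[(w ++ [c]).length - 1]'(by simp)).1.2.2 = γ := by
      rw [List.getElem_concat_length (by simp)]
    exact ⟨w ++ [c], hmem, by simp, (List.take_left (l₁ := w) (l₂ := [c])),
      (IH γ hγ (w ++ [c]) hmem (by simp) hlast).1⟩
  · intro hsucc
    rw [erge_iff] at hsucc
    obtain ⟨w', hw', hlen', htake', herge'⟩ := hsucc β (lt_add_one β)
    have hlt' : ∀ i (hi : i < w.length), (w'[i]'(by omega)) = w[i]'hi := by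
      intro i hi
      have : w[i]'hi = (w'.take w.length)[i]'(by rw [htake']; exact hi) := by
        simp [htake']
      rw [this, List.getElem_take]
    have hdec := hw'.2 (w.length - 1) w.length (by omega) (by omega) (by omega)
    rw [hlt' (w.length - 1) (by omega), hβ] at hdec
    have hidx : w'.length - 1 = w.length := by omega
    have hopt : w'[w'.length - 1]? = w'[w.length]? := by rw [hidx]
    rw [List.getElem?_eq_getElem (by omega : w'.length - 1 < w'.length),
      List.getElem?_eq_getElem (by omega : w.length < w'.length)] at hopt
    have hlast' : ((w'[w'.length - 1]'(by omega)).1.2.2 : Ordinal.{u}) =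
        (w'[w.length]'(by omega)).1.2.2 := by
      rw [Option.some_inj.mp hopt]
    have hnot := (IH (w'[w.length]'(by omega)).1.2.2 hdec w' hw' (by omega) hlast').2
    exact hnot (erge_mono _ (Order.add_one_le_of_lt hdec) herge')

/-- in `W(α)` (for `κ ≤ α < κ⁺`, `κ` infinite), for `w ∈ W(α)` with
domain `[n]` (`n ≥ 1`): `w(n) = P_{n,γ,β}` for some `γ` iff `ER(w;W(α)) = β`. -/
theorem stmt18 (κ : Cardinal.{u}) (α : Ordinal.{u}) (hκ : ℵ₀ ≤ κ)
    (hκα : κ.ord ≤ α) (hα : α < (Order.succ κ).ord) :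
    ∀ n : ℕ, 1 ≤ n → ∀ w ∈ ExW κ α, w.length = n → ∀ β : Ordinal.{u},
      ((∃ r : ExColor κ α, w[n - 1]? = some r ∧ ∃ γ : Ordinal.{u}, r.1 = (n, γ, β)) ↔
        (ERge (ExW κ α) β w ∧ ¬ ERge (ExW κ α) (β + 1) w)) := by
  intro n hn w hw hlen β
  subst hlen
  have h0 : 0 < w.length := by omega
  set r : ExColor κ α := w[w.length - 1]'(by omega) with hr
  have hget : w[w.length - 1]? = some r := List.getElem?_eq_getElem (by omega)
  have hclaim := main_claim κ α hκ r.1.2.2 w hw h0 rfl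
  have harity : r.1.1 = w.length := by
    have := hw.1 (w.length - 1) (by omega)
    rw [← hr] at this
    omega
  constructor
  · rintro ⟨r', hr', γ, hreq⟩
    rw [hget] at hr'
    have : r = r' := by injection hr'
    subst this
    have hβ : r.1.2.2 = β := by rw [hreq]
    rwa [hβ] at hclaim
  · rintro ⟨h1, h2⟩
    refine ⟨r, hget, r.1.2.1, ?_⟩
    have hββ : r.1.2.2 = β := by
      by_contra hne
      rcases lt_or_gt_of_ne hne with h | h
      · exact hclaim.2 (erge_mono _ (Order.add_one_le_of_lt h) h1)
      · exact h2 (erge_mono _ (Order.add_one_le_of_lt h) hclaim.1)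
    rw [← harity, ← hββ]
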